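/- For every m ∈ ℕ, nested words u₁, u₂, v₁, v₂ over Σ, and positions e₁ of u₁ and e₂ of u₂: if (u₁, e₁) ≡_m (u₂, e₂) (quantifier rank m equivalence of the structures expanded with a constant for the distinguished position) and v₁ ≡_m v₂, then u₁↑_{e₁}v₁ ≡_m u₂↑_{e₂}v₂. -/

import Mathlib

open FirstOrder Language

/-- Quantifier rank of a first-order (bounded) formula. -/
def FirstOrder.Language.BoundedFormula.qr {L : FirstOrder.Language} {α : Type*} :
    ∀ {n : ℕ}, L.BoundedFormula α n → ℕ
  | _, .falsum => 0
  | _, .equal _ _ => 0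
  | _, .rel _ _ => 0
  | _, .imp f g => max f.qr g.qr
  | _, .all f => f.qr + 1

/-- Elementary equivalence up to quantifier rank `m` (for sentences). -/
def eqQR (L : FirstOrder.Language) (m : ℕ) (M N : Type)
    (SM : L.Structure M) (SN : L.Structure N) : Prop :=
  ∀ φ : L.Sentence, φ.qr ≤ m →
    ((letI := SM; M ⊨ φ) ↔ (letI := SN; N ⊨ φ))

/-- Elementary equivalence up to quantifier rank `m` of structures expanded with
a constant for a distinguished element: agreement on all formulas in one free
variable of quantifier rank at most `m`, evaluated at the distinguished elements. -/
def eqQR1 (L : FirstOrder.Language) (m : ℕ) (M N : Type)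
    (SM : L.Structure M) (SN : L.Structure N) (e : M) (e' : N) : Prop :=
  ∀ φ : L.Formula (Fin 1), φ.qr ≤ m →
    ((letI := SM; φ.Realize (fun _ => e)) ↔ (letI := SN; φ.Realize (fun _ => e')))

/-- A nested word over alphabet `Alpha` with set of positions `Pos`. -/
structure NestedWordOn (Alpha Pos : Type) where
  le : Pos → Pos → Prop
  linear : IsLinearOrder Pos le
  label : Pos → Alpha
  mt : Pos → Pos → Prop
  mt_le : ∀ {i j}, mt i j → le i j ∧ i ≠ j
  mt_right_unique : ∀ {i j k}, mt i j → mt i k → j = k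
  mt_left_unique : ∀ {j k i}, mt j i → mt k i → j = k
  mt_noncross : ∀ {i₁ i₂ j₁ j₂}, mt i₁ j₁ → mt i₂ j₂ →
    ¬((le i₁ i₂ ∧ i₁ ≠ i₂) ∧ le i₂ j₁ ∧ (le j₁ j₂ ∧ j₁ ≠ j₂))

/-- The two binary relation symbols of the signature of nested words. -/
inductive NWRel2 : Type
  | le
  | mt

/-- The signature of nested words over `Alpha`. -/
def nwLang (Alpha : Type) : FirstOrder.Language :=
  ⟨fun _ => Empty, fun n => match n with
    | 1 => Alpha
    | 2 => NWRel2
    | _ => Empty⟩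

/-- A nested word as a first-order structure over `nwLang Alpha`. -/
def nwStructure {Alpha P : Type} (nw : NestedWordOn Alpha P) :
    (nwLang Alpha).Structure P where
  funMap := fun {_} f => Empty.elim f
  RelMap := fun {n} => match n with
    | 0 => fun r => Empty.elim r
    | 1 => fun (a : Alpha) x => nw.label (x 0) = a
    | 2 => fun r x => match r with
      | NWRel2.le => nw.le (x 0) (x 1)
      | NWRel2.mt => nw.mt (x 0) (x 1)
    | (_ + 3) => fun r => Empty.elim r

/-- The order relation of the insert `w ↑_e v`. -/
def insLE {W V : Type} (lew : W → W → Prop) (lev : V → V → Prop) (e : W) :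
    W ⊕ V → W ⊕ V → Prop
  | .inl i, .inl j => lew i j
  | .inr i, .inr j => lev i j
  | .inl i, .inr _ => lew i e
  | .inr _, .inl i => lew e i ∧ e ≠ i

/-- The matching relation of the insert `w ↑_e v`. -/
def insMT {W V : Type} (mtw : W → W → Prop) (mtv : V → V → Prop) :
    W ⊕ V → W ⊕ V → Prop
  | .inl i, .inl j => mtw i j
  | .inr i, .inr j => mtv i j
  | _, _ => False

/-- The insert `u ↑_e v` of nested words as a first-order structure. -/
def insStructure {Alpha U V : Type}
    (u : NestedWordOn Alpha U) (v : NestedWordOn Alpha V) (e : U) :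
    (nwLang Alpha).Structure (U ⊕ V) where
  funMap := fun {_} f => Empty.elim f
  RelMap := fun {n} => match n with
    | 0 => fun r => Empty.elim r
    | 1 => fun (a : Alpha) x => Sum.elim u.label v.label (x 0) = a
    | 2 => fun r x => match r with
      | NWRel2.le => insLE u.le v.le e (x 0) (x 1)
      | NWRel2.mt => insMT u.mt v.mt (x 0) (x 1)
    | (_ + 3) => fun r => Empty.elim r

namespace EFAux

variable {L : FirstOrder.Language} {M N : Type}

def Atom (L : FirstOrder.Language) {M N : Type} (SM : L.Structure M) (SN : L.Structure N)
    (k : ℕ) (as : Fin k → M) (bs : Fin k → N) : Prop :=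
  (∀ i j, as i = as j ↔ bs i = bs j) ∧
  ∀ (n : ℕ) (R : L.Relations n) (v : Fin n → Fin k),
    ((letI := SM; Structure.RelMap R (as ∘ v)) ↔ (letI := SN; Structure.RelMap R (bs ∘ v)))

def EF (L : FirstOrder.Language) {M N : Type} (SM : L.Structure M) (SN : L.Structure N) :
    (m : ℕ) → (k : ℕ) → (Fin k → M) → (Fin k → N) → Prop
  | 0, k, as, bs => Atom L SM SN k as bs
  | m+1, k, as, bs => Atom L SM SN k as bs ∧
      (∀ a : M, ∃ b : N, EF L SM SN m (k+1) (Fin.snoc as a) (Fin.snoc bs b)) ∧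
      (∀ b : N, ∃ a : M, EF L SM SN m (k+1) (Fin.snoc as a) (Fin.snoc bs b))

theorem EF_toAtom {SM : L.Structure M} {SN : L.Structure N} {m k : ℕ}
    {as : Fin k → M} {bs : Fin k → N} (h : EF L SM SN m k as bs) :
    Atom L SM SN k as bs := by
  cases m with
  | zero => exact h
  | succ m => exact h.1

theorem EF_mono_succ (SM : L.Structure M) (SN : L.Structure N) :
    ∀ (m k : ℕ) (as : Fin k → M) (bs : Fin k → N),
      EF L SM SN (m+1) k as bs → EF L SM SN m k as bs := by
  intro m
  induction m with
  | zero => intro k as bs h; exact h.1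
  | succ m ih =>
    intro k as bs h
    exact ⟨h.1,
      fun a => let ⟨b, hb⟩ := h.2.1 a; ⟨b, ih _ _ _ hb⟩,
      fun b => let ⟨a, ha⟩ := h.2.2 b; ⟨a, ih _ _ _ ha⟩⟩

theorem term_isVar (hF : ∀ n, IsEmpty (L.Functions n)) {γ : Type*} (t : L.Term γ) :
    ∃ i, t = Term.var i := by
  cases t with
  | var i => exact ⟨i, rfl⟩
  | func f _ => exact ((hF _).false f).elim

theorem EF_sound (SM : L.Structure M) (SN : L.Structure N)
    (hF : ∀ n, IsEmpty (L.Functions n)) :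
    ∀ {k : ℕ} (φ : L.BoundedFormula Empty k) (m : ℕ), φ.qr ≤ m →
      ∀ (as : Fin k → M) (bs : Fin k → N), EF L SM SN m k as bs →
      ((letI := SM; φ.Realize Empty.elim as) ↔ (letI := SN; φ.Realize Empty.elim bs)) := by
  intro k φ
  induction φ with
  | falsum => intro m _ as bs _; exact Iff.rfl
  | equal t₁ t₂ =>
    intro m _ as bs hEF
    obtain ⟨x₁, rfl⟩ := term_isVar hF t₁
    obtain ⟨x₂, rfl⟩ := term_isVar hF t₂
    rcases x₁ with e | i₁
    · exact e.elim
    rcases x₂ with e | i₂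
    · exact e.elim
    exact (EF_toAtom hEF).1 i₁ i₂
  | rel R ts =>
    intro m _ as bs hEF
    have hf' : ∀ i, ∃ j, ts i = Term.var (Sum.inr j) := by
      intro i
      obtain ⟨x, hx⟩ := term_isVar hF (ts i)
      rcases x with e | j
      · exact e.elim
      · exact ⟨j, hx⟩
    choose g hg using hf'
    have h := (EF_toAtom hEF).2 _ R g
    have e1 : (fun i => Term.realize (M := M) (Sum.elim Empty.elim as) (ts i)) = as ∘ g := by
      funext i; rw [hg i]; rfl
    have e2 : (fun i => Term.realize (M := N) (Sum.elim Empty.elim bs) (ts i)) = bs ∘ g := by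
      funext i; rw [hg i]; rfl
    show (letI := SM; Structure.RelMap R fun i => Term.realize (Sum.elim Empty.elim as) (ts i)) ↔
      (letI := SN; Structure.RelMap R fun i => Term.realize (Sum.elim Empty.elim bs) (ts i))
    rw [e1, e2]
    exact h
  | imp f g ihf ihg =>
    intro m hm as bs hEF
    have hm' : f.qr ≤ m ∧ g.qr ≤ m := by
      have : max f.qr g.qr ≤ m := hm
      omega
    simp only [BoundedFormula.realize_imp]
    rw [ihf m hm'.1 as bs hEF, ihg m hm'.2 as bs hEF]
  | all f ih =>
    intro m hm as bs hEF
    cases m with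
    | zero => exact absurd hm (by simp [BoundedFormula.qr])
    | succ m =>
      have hq : f.qr ≤ m := by
        have : f.qr + 1 ≤ m + 1 := hm
        omega
      simp only [BoundedFormula.realize_all]
      constructor
      · intro h b
        obtain ⟨a, ha⟩ := hEF.2.2 b
        exact (ih m hq _ _ ha).mp (h a)
      · intro h a
        obtain ⟨b, hb⟩ := hEF.2.1 a
        exact (ih m hq _ _ hb).mpr (h b)


section QR
variable {α β : Type*} {n : ℕ}

theorem qr_bot : (⊥ : L.BoundedFormula α n).qr = 0 := rfl

theorem qr_not (φ : L.BoundedFormula α n) : φ.not.qr = φ.qr := by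
  show max φ.qr (⊥ : L.BoundedFormula α n).qr = φ.qr
  simp [qr_bot]

theorem qr_inf (φ ψ : L.BoundedFormula α n) : (φ ⊓ ψ).qr = max φ.qr ψ.qr := by
  show ((φ.imp ψ.not).not).qr = _
  rw [qr_not]
  show max φ.qr ψ.not.qr = _
  rw [qr_not]

theorem qr_top : (⊤ : L.BoundedFormula α n).qr = 0 := rfl

theorem qr_ex (φ : L.BoundedFormula α (n + 1)) : φ.ex.qr = φ.qr + 1 := by
  show φ.not.all.not.qr = _
  rw [qr_not]
  show φ.not.qr + 1 = _
  rw [qr_not]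

theorem qr_foldr_inf (l : List (L.BoundedFormula α n)) (m : ℕ)
    (h : ∀ φ ∈ l, φ.qr ≤ m) : (l.foldr (· ⊓ ·) ⊤).qr ≤ m := by
  induction l with
  | nil => simp [qr_top]
  | cons a l ih =>
    rw [List.foldr_cons, qr_inf]
    exact max_le (h a (by simp)) (ih fun φ hφ => h φ (by simp [hφ]))

theorem qr_iInf {β : Type*} [Finite β] (s : Finset β) (f : β → L.BoundedFormula α n) (m : ℕ)
    (h : ∀ b, (f b).qr ≤ m) : (BoundedFormula.iInf f).qr ≤ m := by
  apply qr_foldr_inf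
  intro φ hφ
  obtain ⟨b, _, rfl⟩ := List.mem_map.mp hφ
  exact h b

theorem qr_castLE : ∀ {m n : ℕ} (h : m ≤ n) (φ : L.BoundedFormula α m),
    (φ.castLE h).qr = φ.qr := by
  intro m n h φ
  induction φ generalizing n with
  | falsum => rfl
  | equal => rfl
  | rel => rfl
  | imp f g ihf ihg => simp only [BoundedFormula.castLE]; show max _ _ = _; rw [ihf, ihg]; rfl
  | all f ih => simp only [BoundedFormula.castLE]; show _ + 1 = _; rw [ih]; rfl

theorem qr_mapTermRel {L' : FirstOrder.Language} {g : ℕ → ℕ}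
    (ft : ∀ n, L.Term (α ⊕ Fin n) → L'.Term (β ⊕ Fin (g n)))
    (fr : ∀ n, L.Relations n → L'.Relations n)
    (h : ∀ n, L'.BoundedFormula β (g (n + 1)) → L'.BoundedFormula β (g n + 1))
    (hh : ∀ n ψ, (h n ψ).qr = ψ.qr) :
    ∀ {n} (φ : L.BoundedFormula α n), (φ.mapTermRel ft fr h).qr = φ.qr := by
  intro n φ
  induction φ with
  | falsum => rfl
  | equal => rfl
  | rel => rfl
  | imp f g' ihf ihg =>
    simp only [BoundedFormula.mapTermRel]; show max _ _ = _; rw [ihf, ihg]; rfl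
  | all f ih =>
    simp only [BoundedFormula.mapTermRel]; show _ + 1 = _; rw [hh, ih]; rfl

theorem qr_relabel (g : α → β ⊕ Fin n) {k : ℕ} (φ : L.BoundedFormula α k) :
    (φ.relabel g).qr = φ.qr :=
  qr_mapTermRel _ _ _ (fun _ _ => qr_castLE _ _) φ

theorem qr_formula_relabel (g : α → β) (φ : L.Formula α) :
    (φ.relabel g).qr = φ.qr :=
  qr_relabel _ φ

theorem qr_toFormula : ∀ {n : ℕ} (φ : L.BoundedFormula α n), φ.toFormula.qr = φ.qr := by
  intro n φ
  induction φ with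
  | falsum => rfl
  | equal => rfl
  | rel => rfl
  | imp f g ihf ihg =>
    show max _ _ = _
    rw [ihf, ihg]; rfl
  | all f ih =>
    show (BoundedFormula.relabel _ f.toFormula).qr + 1 = _
    rw [qr_relabel, ih]; rfl


end QR

theorem atom_of_qr0 (SM : L.Structure M) (SN : L.Structure N) (k : ℕ)
    (as : Fin k → M) (bs : Fin k → N)
    (h : ∀ φ : L.BoundedFormula Empty k, φ.qr ≤ 0 →
      ((letI := SM; φ.Realize Empty.elim as) ↔ (letI := SN; φ.Realize Empty.elim bs))) :
    Atom L SM SN k as bs := by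
  constructor
  · intro i j
    exact h (BoundedFormula.equal (Term.var (Sum.inr i)) (Term.var (Sum.inr j))) le_rfl
  · intro n R v
    exact h (BoundedFormula.rel R (fun i => Term.var (Sum.inr (v i)))) le_rfl

theorem EF_complete (SM : L.Structure M) (SN : L.Structure N) [Fintype M] [Fintype N] :
    ∀ (m k : ℕ) (as : Fin k → M) (bs : Fin k → N),
      (∀ φ : L.BoundedFormula Empty k, φ.qr ≤ m →
        ((letI := SM; φ.Realize Empty.elim as) ↔ (letI := SN; φ.Realize Empty.elim bs))) →
      EF L SM SN m k as bs := by
  intro m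
  induction m with
  | zero => intro k as bs h; exact atom_of_qr0 SM SN k as bs h
  | succ m ih =>
    intro k as bs h
    refine ⟨atom_of_qr0 SM SN k as bs (fun φ hφ => h φ (le_trans hφ (Nat.zero_le _))), ?_, ?_⟩
    · intro a
      by_contra hc
      push_neg at hc
      have key : ∀ b : N, ∃ φ : L.BoundedFormula Empty (k+1), φ.qr ≤ m ∧
          (letI := SM; φ.Realize Empty.elim (Fin.snoc as a)) ∧
          ¬ (letI := SN; φ.Realize Empty.elim (Fin.snoc bs b)) := by
        intro b
        have hb := hc b
        have hcon : ¬ ∀ φ : L.BoundedFormula Empty (k+1), φ.qr ≤ m →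
            ((letI := SM; φ.Realize Empty.elim (Fin.snoc as a)) ↔
             (letI := SN; φ.Realize Empty.elim (Fin.snoc bs b))) :=
          fun hcon => hb (ih _ _ _ hcon)
        push_neg at hcon
        obtain ⟨φ, hqr, hne⟩ := hcon
        rcases hne with ⟨hM, hN⟩ | ⟨hM, hN⟩
        · exact ⟨φ, hqr, hM, hN⟩
        · exact ⟨φ.not, by rw [qr_not]; exact hqr, hM, fun hn => hn hN⟩
      choose Φ hΦ using key
      have hqr : ((BoundedFormula.iInf Φ).ex).qr ≤ m + 1 := by
        rw [qr_ex]
        have := qr_iInf (Finset.univ : Finset N) Φ m (fun b => (hΦ b).1)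
        omega
      have hiff := h _ hqr
      have hMex : (letI := SM; (BoundedFormula.iInf Φ).ex.Realize
          Empty.elim as) := by
        rw [BoundedFormula.realize_ex]
        refine ⟨a, ?_⟩
        rw [BoundedFormula.realize_iInf]
        exact fun b => (hΦ b).2.1
      have hNex := hiff.mp hMex
      rw [BoundedFormula.realize_ex] at hNex
      obtain ⟨b, hb⟩ := hNex
      rw [BoundedFormula.realize_iInf] at hb
      exact (hΦ b).2.2 (hb b)
    · intro b
      by_contra hc
      push_neg at hc
      have key : ∀ a : M, ∃ φ : L.BoundedFormula Empty (k+1), φ.qr ≤ m ∧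
          ¬ (letI := SM; φ.Realize Empty.elim (Fin.snoc as a)) ∧
          (letI := SN; φ.Realize Empty.elim (Fin.snoc bs b)) := by
        intro a
        have ha := hc a
        have hcon : ¬ ∀ φ : L.BoundedFormula Empty (k+1), φ.qr ≤ m →
            ((letI := SM; φ.Realize Empty.elim (Fin.snoc as a)) ↔
             (letI := SN; φ.Realize Empty.elim (Fin.snoc bs b))) :=
          fun hcon => ha (ih _ _ _ hcon)
        push_neg at hcon
        obtain ⟨φ, hqr, hne⟩ := hcon
        rcases hne with ⟨hM, hN⟩ | ⟨hM, hN⟩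
        · exact ⟨φ.not, by rw [qr_not]; exact hqr, fun hn => hn hM, hN⟩
        · exact ⟨φ, hqr, hM, hN⟩
      choose Φ hΦ using key
      have hqr : ((BoundedFormula.iInf Φ).ex).qr ≤ m + 1 := by
        rw [qr_ex]
        have := qr_iInf (Finset.univ : Finset M) Φ m (fun a => (hΦ a).1)
        omega
      have hiff := h _ hqr
      have hNex : (letI := SN; (BoundedFormula.iInf Φ).ex.Realize
          Empty.elim bs) := by
        rw [BoundedFormula.realize_ex]
        refine ⟨b, ?_⟩
        rw [BoundedFormula.realize_iInf]
        exact fun a => (hΦ a).2.2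
      have hMex := hiff.mpr hNex
      rw [BoundedFormula.realize_ex] at hMex
      obtain ⟨a, ha⟩ := hMex
      rw [BoundedFormula.realize_iInf] at ha
      exact (hΦ a).2.1 (ha a)


theorem comp_snoc_left {W V : Type} {ku kv k : ℕ} (f : Fin ku → W) (g : Fin kv → V)
    (σ : Fin k → Fin ku ⊕ Fin kv) (x : W) :
    (Sum.map (Fin.snoc f x) g ∘
      (Fin.snoc (Sum.map Fin.castSucc id ∘ σ) (Sum.inl (Fin.last ku)) : Fin (k+1) → _)) =
      Fin.snoc (Sum.map f g ∘ σ) (Sum.inl x) := by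
  funext i
  refine Fin.lastCases ?_ ?_ i
  · simp
  · intro j
    simp only [Function.comp_apply, Fin.snoc_castSucc]
    rcases σ j with t | t <;> simp

theorem comp_snoc_right {W V : Type} {ku kv k : ℕ} (f : Fin ku → W) (g : Fin kv → V)
    (σ : Fin k → Fin ku ⊕ Fin kv) (x : V) :
    (Sum.map f (Fin.snoc g x) ∘
      (Fin.snoc (Sum.map id Fin.castSucc ∘ σ) (Sum.inr (Fin.last kv)) : Fin (k+1) → _)) =
      Fin.snoc (Sum.map f g ∘ σ) (Sum.inr x) := by
  funext i
  refine Fin.lastCases ?_ ?_ i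
  · simp
  · intro j
    simp only [Function.comp_apply, Fin.snoc_castSucc]
    rcases σ j with t | t <;> simp

section Comp
variable {Alpha U₁ U₂ V₁ V₂ : Type}
variable (u₁ : NestedWordOn Alpha U₁) (u₂ : NestedWordOn Alpha U₂)
variable (v₁ : NestedWordOn Alpha V₁) (v₂ : NestedWordOn Alpha V₂)
variable (e₁ : U₁) (e₂ : U₂)

theorem Atom_comp {ku kv : ℕ} {au₁ : Fin ku → U₁} {au₂ : Fin ku → U₂}
    {av₁ : Fin kv → V₁} {av₂ : Fin kv → V₂} (i0 : Fin ku)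
    (h1 : au₁ i0 = e₁) (h2 : au₂ i0 = e₂)
    (hU : Atom (nwLang Alpha) (nwStructure u₁) (nwStructure u₂) ku au₁ au₂)
    (hV : Atom (nwLang Alpha) (nwStructure v₁) (nwStructure v₂) kv av₁ av₂)
    (k : ℕ) (σ : Fin k → Fin ku ⊕ Fin kv) :
    Atom (nwLang Alpha) (insStructure u₁ v₁ e₁) (insStructure u₂ v₂ e₂) k
      (Sum.map au₁ av₁ ∘ σ) (Sum.map au₂ av₂ ∘ σ) := by
  obtain ⟨hUeq, hUrel⟩ := hU
  obtain ⟨hVeq, hVrel⟩ := hV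
  have hUle : ∀ i j, u₁.le (au₁ i) (au₁ j) ↔ u₂.le (au₂ i) (au₂ j) :=
    fun i j => hUrel 2 NWRel2.le ![i, j]
  have hUmt : ∀ i j, u₁.mt (au₁ i) (au₁ j) ↔ u₂.mt (au₂ i) (au₂ j) :=
    fun i j => hUrel 2 NWRel2.mt ![i, j]
  have hUlab : ∀ (a : Alpha) i, u₁.label (au₁ i) = a ↔ u₂.label (au₂ i) = a :=
    fun a i => hUrel 1 a ![i]
  have hVle : ∀ i j, v₁.le (av₁ i) (av₁ j) ↔ v₂.le (av₂ i) (av₂ j) :=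
    fun i j => hVrel 2 NWRel2.le ![i, j]
  have hVmt : ∀ i j, v₁.mt (av₁ i) (av₁ j) ↔ v₂.mt (av₂ i) (av₂ j) :=
    fun i j => hVrel 2 NWRel2.mt ![i, j]
  have hVlab : ∀ (a : Alpha) i, v₁.label (av₁ i) = a ↔ v₂.label (av₂ i) = a :=
    fun a i => hVrel 1 a ![i]
  constructor
  · intro i j
    rcases hσi : σ i with x | x <;> rcases hσj : σ j with y | y <;>
      simp only [Function.comp_apply, hσi, hσj, Sum.map_inl, Sum.map_inr,
        Sum.inl.injEq, Sum.inr.injEq]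
    · exact hUeq x y
    · simp
    · simp
    · exact hVeq x y
  · intro n R v
    match n, R with
    | 0, R => exact Empty.elim R
    | (n+3), R => exact Empty.elim R
    | 1, (R : Alpha) =>
      show Sum.elim u₁.label v₁.label (Sum.map au₁ av₁ (σ (v 0))) = R ↔
        Sum.elim u₂.label v₂.label (Sum.map au₂ av₂ (σ (v 0))) = R
      rcases hσ : σ (v 0) with x | x <;> simp only [Sum.map_inl, Sum.map_inr]
      · simpa using hUlab R x
      · simpa using hVlab R x
    | 2, NWRel2.le =>
      show insLE u₁.le v₁.le e₁ (Sum.map au₁ av₁ (σ (v 0))) (Sum.map au₁ av₁ (σ (v 1))) ↔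
        insLE u₂.le v₂.le e₂ (Sum.map au₂ av₂ (σ (v 0))) (Sum.map au₂ av₂ (σ (v 1)))
      rcases h0 : σ (v 0) with x | x <;> rcases h1' : σ (v 1) with y | y <;>
        simp only [Sum.map_inl, Sum.map_inr]
      · exact hUle x y
      · show u₁.le (au₁ x) e₁ ↔ u₂.le (au₂ x) e₂
        rw [← h1, ← h2]; exact hUle x i0
      · show (u₁.le e₁ (au₁ y) ∧ e₁ ≠ au₁ y) ↔ (u₂.le e₂ (au₂ y) ∧ e₂ ≠ au₂ y)
        rw [← h1, ← h2]
        exact and_congr (hUle i0 y) (not_congr (hUeq i0 y))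
      · exact hVle x y
    | 2, NWRel2.mt =>
      show insMT u₁.mt v₁.mt (Sum.map au₁ av₁ (σ (v 0))) (Sum.map au₁ av₁ (σ (v 1))) ↔
        insMT u₂.mt v₂.mt (Sum.map au₂ av₂ (σ (v 0))) (Sum.map au₂ av₂ (σ (v 1)))
      rcases h0 : σ (v 0) with x | x <;> rcases h1' : σ (v 1) with y | y <;>
        simp only [Sum.map_inl, Sum.map_inr]
      · exact hUmt x y
      · exact Iff.rfl
      · exact Iff.rfl
      · exact hVmt x y


theorem EF_comp :
    ∀ (m : ℕ) {ku kv : ℕ} (au₁ : Fin ku → U₁) (au₂ : Fin ku → U₂)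
      (av₁ : Fin kv → V₁) (av₂ : Fin kv → V₂) (i0 : Fin ku),
      au₁ i0 = e₁ → au₂ i0 = e₂ →
      EF (nwLang Alpha) (nwStructure u₁) (nwStructure u₂) m ku au₁ au₂ →
      EF (nwLang Alpha) (nwStructure v₁) (nwStructure v₂) m kv av₁ av₂ →
      ∀ (k : ℕ) (σ : Fin k → Fin ku ⊕ Fin kv),
      EF (nwLang Alpha) (insStructure u₁ v₁ e₁) (insStructure u₂ v₂ e₂) m k
        (Sum.map au₁ av₁ ∘ σ) (Sum.map au₂ av₂ ∘ σ) := by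
  intro m
  induction m with
  | zero =>
    intro ku kv au₁ au₂ av₁ av₂ i0 h1 h2 hU hV k σ
    exact Atom_comp u₁ u₂ v₁ v₂ e₁ e₂ i0 h1 h2 hU hV k σ
  | succ m ih =>
    intro ku kv au₁ au₂ av₁ av₂ i0 h1 h2 hU hV k σ
    refine ⟨Atom_comp u₁ u₂ v₁ v₂ e₁ e₂ i0 h1 h2 (EF_toAtom hU) (EF_toAtom hV) k σ, ?_, ?_⟩
    · rintro (aU | aV)
      · obtain ⟨bU, hb⟩ := hU.2.1 aU
        refine ⟨Sum.inl bU, ?_⟩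
        have key := ih (Fin.snoc au₁ aU) (Fin.snoc au₂ bU) av₁ av₂ i0.castSucc
          (by rw [Fin.snoc_castSucc]; exact h1) (by rw [Fin.snoc_castSucc]; exact h2)
          hb (EF_mono_succ _ _ m kv av₁ av₂ hV) (k+1)
          (Fin.snoc (Sum.map Fin.castSucc id ∘ σ) (Sum.inl (Fin.last ku)))
        rwa [comp_snoc_left, comp_snoc_left] at key
      · obtain ⟨bV, hb⟩ := hV.2.1 aV
        refine ⟨Sum.inr bV, ?_⟩
        have key := ih au₁ au₂ (Fin.snoc av₁ aV) (Fin.snoc av₂ bV) i0 h1 h2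
          (EF_mono_succ _ _ m ku au₁ au₂ hU) hb (k+1)
          (Fin.snoc (Sum.map id Fin.castSucc ∘ σ) (Sum.inr (Fin.last kv)))
        rwa [comp_snoc_right, comp_snoc_right] at key
    · rintro (bU | bV)
      · obtain ⟨aU, ha⟩ := hU.2.2 bU
        refine ⟨Sum.inl aU, ?_⟩
        have key := ih (Fin.snoc au₁ aU) (Fin.snoc au₂ bU) av₁ av₂ i0.castSucc
          (by rw [Fin.snoc_castSucc]; exact h1) (by rw [Fin.snoc_castSucc]; exact h2)
          ha (EF_mono_succ _ _ m kv av₁ av₂ hV) (k+1)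
          (Fin.snoc (Sum.map Fin.castSucc id ∘ σ) (Sum.inl (Fin.last ku)))
        rwa [comp_snoc_left, comp_snoc_left] at key
      · obtain ⟨aV, ha⟩ := hV.2.2 bV
        refine ⟨Sum.inr aV, ?_⟩
        have key := ih au₁ au₂ (Fin.snoc av₁ aV) (Fin.snoc av₂ bV) i0 h1 h2
          (EF_mono_succ _ _ m ku au₁ au₂ hU) ha (k+1)
          (Fin.snoc (Sum.map id Fin.castSucc ∘ σ) (Sum.inr (Fin.last kv)))
        rwa [comp_snoc_right, comp_snoc_right] at key

end Comp

end EFAux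

/-- Composition lemma for inserts of nested words:
`(u₁, e₁) ≡_m (u₂, e₂)` and `v₁ ≡_m v₂` imply `u₁↑_{e₁}v₁ ≡_m u₂↑_{e₂}v₂`. -/
theorem insert_preserves_qr_equivalence (Alpha : Type) [Fintype Alpha] (m : ℕ)
    (U₁ U₂ V₁ V₂ : Type) [Fintype U₁] [Fintype U₂] [Fintype V₁] [Fintype V₂]
    (u₁ : NestedWordOn Alpha U₁) (u₂ : NestedWordOn Alpha U₂)
    (v₁ : NestedWordOn Alpha V₁) (v₂ : NestedWordOn Alpha V₂)
    (e₁ : U₁) (e₂ : U₂)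
    (hu : eqQR1 (nwLang Alpha) m U₁ U₂ (nwStructure u₁) (nwStructure u₂) e₁ e₂)
    (hv : eqQR (nwLang Alpha) m V₁ V₂ (nwStructure v₁) (nwStructure v₂)) :
    eqQR (nwLang Alpha) m (U₁ ⊕ V₁) (U₂ ⊕ V₂)
      (insStructure u₁ v₁ e₁) (insStructure u₂ v₂ e₂) := by
  classical
  have hF : ∀ n, IsEmpty ((nwLang Alpha).Functions n) := fun n => ⟨fun x => x.elim⟩
  have conv : ∀ (W : Type) (SW : (nwLang Alpha).Structure W) (φ : (nwLang Alpha).Sentence),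
      (letI := SW; W ⊨ φ) ↔ (letI := SW; BoundedFormula.Realize φ Empty.elim (Fin.elim0 : Fin 0 → W)) := by
    intro W SW φ
    have h1 : (Empty.elim : Empty → W) = default := funext fun x => x.elim
    have h2 : (Fin.elim0 : Fin 0 → W) = default := funext fun i => i.elim0
    rw [h1, h2]
    exact Iff.rfl
  have key1 : ∀ (W : Type) (SW : (nwLang Alpha).Structure W) (e : W)
      (φ : (nwLang Alpha).BoundedFormula Empty 1),
      (letI := SW; Formula.Realize (Formula.relabel (Sum.elim Empty.elim id) φ.toFormula)
        (fun _ => e)) ↔ (letI := SW; φ.Realize Empty.elim (fun _ => e)) := by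
    intro W SW e φ
    letI := SW
    rw [Formula.realize_relabel, BoundedFormula.realize_toFormula]
    rw [show (((fun _ => e) ∘ Sum.elim Empty.elim id) ∘ Sum.inl : Empty → W) = Empty.elim from
      funext fun x => x.elim]
    exact Iff.rfl
  have hvEF : EFAux.EF (nwLang Alpha) (nwStructure v₁) (nwStructure v₂) m 0
      Fin.elim0 Fin.elim0 := by
    apply EFAux.EF_complete
    intro φ hφ
    rw [← conv V₁ (nwStructure v₁) φ, ← conv V₂ (nwStructure v₂) φ]
    exact hv φ hφ
  have huEF : EFAux.EF (nwLang Alpha) (nwStructure u₁) (nwStructure u₂) m 1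
      (fun _ => e₁) (fun _ => e₂) := by
    apply EFAux.EF_complete
    intro φ hφ
    have hq : (Formula.relabel (Sum.elim Empty.elim id) φ.toFormula).qr ≤ m := by
      rw [EFAux.qr_formula_relabel, EFAux.qr_toFormula]; exact hφ
    exact (key1 U₁ (nwStructure u₁) e₁ φ).symm.trans
      ((hu _ hq).trans (key1 U₂ (nwStructure u₂) e₂ φ))
  have hins := EFAux.EF_comp u₁ u₂ v₁ v₂ e₁ e₂ m (fun _ => e₁) (fun _ => e₂)
      Fin.elim0 Fin.elim0 (0 : Fin 1) rfl rfl huEF hvEF 0 Fin.elim0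
  rw [show (Sum.map (fun _ => e₁) Fin.elim0 ∘ Fin.elim0 : Fin 0 → U₁ ⊕ V₁) = Fin.elim0 from
      funext fun i => i.elim0,
    show (Sum.map (fun _ => e₂) Fin.elim0 ∘ Fin.elim0 : Fin 0 → U₂ ⊕ V₂) = Fin.elim0 from
      funext fun i => i.elim0] at hins
  intro φ hφ
  rw [conv _ (insStructure u₁ v₁ e₁) φ, conv _ (insStructure u₂ v₂ e₂) φ]
  exact EFAux.EF_sound _ _ hF φ m hφ _ _ hins
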